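/- Let Λ be an Artin algebra and C a subcategory of mod Λ closed under direct sums with Φ-dim(C) = n < ∞. If Ψ-dim(C) = m < ∞, then fin.dim(add Ω^n C) ≤ m − n < ∞. -/

import Mathlib

open scoped Classical

/-- An abstract model of the category `mod Λ` of finitely generated left modules over
an Artin algebra `Λ`, presented through the Krull–Schmidt theorem: a finitely
generated module is (the isomorphism class of) a finite multiset of indecomposable
modules.  The data records which indecomposables are projective, and the multiset of
indecomposable direct summands of the syzygy of each indecomposable (the kernel of a
projective cover). -/
structure ModData where
  /-- iso classes of indecomposable finitely generated modules -/
  Idec : Type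
  /-- which indecomposables are projective -/
  proj : Idec → Prop
  /-- the syzygy of an indecomposable -/
  syz : Idec → Multiset Idec

namespace ModData

variable (Λ : ModData)

/-- finitely generated `Λ`-modules (multisets of indecomposables) -/
abbrev Mod := Multiset Λ.Idec

/-- the syzygy operator `Ω` (extended additively) -/
def Ω (X : Λ.Mod) : Λ.Mod := X.bind Λ.syz

/-- `X` is a projective module -/
def IsProj (X : Λ.Mod) : Prop := ∀ i ∈ X, Λ.proj i

/-- the projective dimension `pd X ∈ ℕ∞`: the least `m` with `Ω^[m] X` projective
(and `⊤` if there is no such `m`) -/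
noncomputable def pd (X : Λ.Mod) : ℕ∞ :=
  sInf ((fun m : ℕ => (m : ℕ∞)) '' {m : ℕ | Λ.IsProj (Λ.Ω^[m] X)})

/-- the free abelian group `K` on the iso classes of indecomposable non-projective
finitely generated modules -/
abbrev K := FreeAbelianGroup {i : Λ.Idec // ¬ Λ.proj i}

/-- the class `[X]` of an indecomposable in `K` (projectives are sent to `0`) -/
noncomputable def cls (i : Λ.Idec) : Λ.K :=
  if h : Λ.proj i then 0 else FreeAbelianGroup.of ⟨i, h⟩

/-- the class `[X] ∈ K` of a module `X` -/
noncomputable def clsM (X : Λ.Mod) : Λ.K := (X.map Λ.cls).sum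

/-- the endomorphism `L` of `K` with `L [X] = [Ω X]` -/
noncomputable def L : Λ.K →+ Λ.K :=
  FreeAbelianGroup.lift fun i => Λ.clsM (Λ.syz i.1)

/-- `⟨X⟩` : the subgroup of `K` generated by the classes of the indecomposable
non-projective direct summands of `X` -/
def gen (X : Λ.Mod) : AddSubgroup Λ.K :=
  AddSubgroup.closure (Λ.cls '' {i | i ∈ X})

/-- the rank of a subgroup of `K` -/
noncomputable def rk (H : AddSubgroup Λ.K) : Cardinal :=
  Module.rank ℤ (AddSubgroup.toIntSubmodule H)

/-- the iterated image `L^k H` of a subgroup of `K` -/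
noncomputable def Lpow (k : ℕ) (H : AddSubgroup Λ.K) : AddSubgroup Λ.K :=
  (fun H' => AddSubgroup.map Λ.L H')^[k] H

/-- the (first) Igusa–Todorov function
`Φ(X) = min {n | rk L^k⟨X⟩ = rk L^(k+1)⟨X⟩ for all k ≥ n}` -/
noncomputable def Phi (X : Λ.Mod) : ℕ :=
  sInf {n : ℕ | ∀ k, n ≤ k →
    Λ.rk (Λ.Lpow k (Λ.gen X)) = Λ.rk (Λ.Lpow (k + 1) (Λ.gen X))}

/-- `add C` : the closure of a class of modules under finite direct sums and
direct summands -/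
def addCl (C : Set Λ.Mod) : Set Λ.Mod :=
  {X | ∃ Y ∈ AddSubmonoid.closure C, X ≤ Y}

/-- `C ⊕ D` : the class of direct sums of a module of `C` and a module of `D` -/
def oplus (C D : Set Λ.Mod) : Set Λ.Mod :=
  {X | ∃ Y ∈ C, ∃ Z ∈ D, X = Y + Z}

/-- the finitistic dimension of a class:
`fin.dim C = sup {pd X | X ∈ C, pd X < ∞}` -/
noncomputable def findim (C : Set Λ.Mod) : ℕ∞ :=
  sSup (Λ.pd '' {X | X ∈ C ∧ Λ.pd X ≠ ⊤})

/-- the (second) Igusa–Todorov function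
`Ψ(X) = Φ(X) + fin.dim (add Ω^(Φ X) X)` -/
noncomputable def Psi (X : Λ.Mod) : ℕ∞ :=
  (Λ.Phi X : ℕ∞) + Λ.findim (Λ.addCl {Λ.Ω^[Λ.Phi X] X})

/-- the `Φ`-dimension of a class -/
noncomputable def PhiDim (C : Set Λ.Mod) : ℕ∞ := ⨆ X ∈ C, (Λ.Phi X : ℕ∞)

/-- the `Ψ`-dimension of a class -/
noncomputable def PsiDim (C : Set Λ.Mod) : ℕ∞ := ⨆ X ∈ C, Λ.Psi X

/-- `C` is an `(n,t,V,D)`-GLIT class, relative to the relation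
`ses X₁ X₀ Z` ↔ "there is a short exact sequence `0 → X₁ → X₀ → Z → 0`":
`D` is additively closed, `t`-syzygy invariant with `Φ`-dim`(D) < ∞`, and every
`C ∈ 𝒞` admits a s.e.s. `0 → V₁ ⊕ D₁ → V₀ ⊕ D₀ → Ω^n C → 0` with `Vᵢ ∈ add V`,
`Dᵢ ∈ D`. -/
def IsGLIT (ses : Λ.Mod → Λ.Mod → Λ.Mod → Prop) (C : Set Λ.Mod)
    (n t : ℕ) (V : Λ.Mod) (D : Set Λ.Mod) : Prop :=
  1 ≤ t ∧ Λ.addCl D = D ∧ (∀ X ∈ D, Λ.Ω^[t] X ∈ D) ∧ Λ.PhiDim D ≠ ⊤ ∧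
    ∀ X ∈ C, ∃ V₁ ∈ Λ.addCl {V}, ∃ V₀ ∈ Λ.addCl {V}, ∃ D₁ ∈ D, ∃ D₀ ∈ D,
      ses (V₁ + D₁) (V₀ + D₀) (Λ.Ω^[n] X)

/-- the subgroup of `K` generated by the classes of the summands of modules of `D` -/
noncomputable def relSub (D : Set Λ.Mod) : AddSubgroup Λ.K :=
  AddSubgroup.closure (Λ.cls '' {i | ∃ X ∈ D, i ∈ X})

/-- the rank of (the image of) a subgroup of `K` in the quotient of `K` by the
classes of modules of `D` -/
noncomputable def rkRel (D : Set Λ.Mod) (H : AddSubgroup Λ.K) : Cardinal :=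
  Module.rank ℤ
    ((AddSubgroup.toIntSubmodule H).map (AddSubgroup.toIntSubmodule (Λ.relSub D)).mkQ)

/-- the generalized Igusa–Todorov function `Φ_{[D]}` relative to a class `D`:
defined as `Φ`, but with ranks computed in the quotient of `K` by the subgroup
generated by the classes of modules in `D` (and of projectives) -/
noncomputable def PhiRel (D : Set Λ.Mod) (X : Λ.Mod) : ℕ :=
  sInf {n : ℕ | ∀ k, n ≤ k →
    Λ.rkRel D (Λ.Lpow k (Λ.gen X)) = Λ.rkRel D (Λ.Lpow (k + 1) (Λ.gen X))}

end ModData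

section AuxLinear

variable {A : Type*} [AddCommGroup A]

lemma memTIS (H : AddSubgroup A) (x : A) :
    x ∈ AddSubgroup.toIntSubmodule H ↔ x ∈ H := Iff.rfl

lemma map_toIntSubmodule (f : A →+ A) (H : AddSubgroup A) :
    AddSubgroup.toIntSubmodule (H.map f)
      = (AddSubgroup.toIntSubmodule H).map f.toIntLinearMap := by
  ext x
  simp only [Submodule.mem_map, AddSubgroup.mem_map, memTIS,
    AddMonoidHom.coe_toIntLinearMap]

lemma toIntSubmodule_closure (s : Set A) :
    AddSubgroup.toIntSubmodule (AddSubgroup.closure s) = Submodule.span ℤ s := by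
  apply le_antisymm
  · intro x hx
    have hx' : x ∈ AddSubgroup.closure s := hx
    exact (AddSubgroup.closure_le ((Submodule.span ℤ s).toAddSubgroup)).mpr
      Submodule.subset_span hx'
  · exact Submodule.span_le.mpr fun x hx => AddSubgroup.subset_closure hx

/-- the restriction of `φ` to a surjection `p → p.map φ` -/
noncomputable def resMap (φ : A →ₗ[ℤ] A) (p : Submodule ℤ A) : p →ₗ[ℤ] p.map φ :=
  φ.restrict fun y hy => Submodule.mem_map_of_mem hy

lemma resMap_surj (φ : A →ₗ[ℤ] A) (p : Submodule ℤ A) :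
    Function.Surjective (resMap φ p) := by
  rintro ⟨z, y, hy, rfl⟩
  exact ⟨⟨y, hy⟩, rfl⟩

lemma myRankMapLe (φ : A →ₗ[ℤ] A) (p : Submodule ℤ A) :
    Module.rank ℤ (p.map φ) ≤ Module.rank ℤ p :=
  LinearMap.rank_le_of_surjective (resMap φ p) (resMap_surj φ p)

lemma inj_of_rank_map_eq [NoZeroSMulDivisors ℤ A]
    (φ : A →ₗ[ℤ] A) (H : Submodule ℤ A) (hfg : H.FG)
    (hr : Module.rank ℤ (H.map φ) = Module.rank ℤ H) :
    ∀ x ∈ H, φ x = 0 → x = 0 := by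
  intro x hx hφ
  haveI : Module.Finite ℤ H := Module.Finite.iff_fg.mpr hfg
  set f : H →ₗ[ℤ] H.map φ := resMap φ H with hfdef
  have hsurj : Function.Surjective f := resMap_surj φ H
  have e := f.quotKerEquivOfSurjective hsurj
  have h1 : Module.rank ℤ (H ⧸ LinearMap.ker f) = Module.rank ℤ H := by
    rw [e.rank_eq, hr]
  have h2 := rank_quotient_add_rank_le (LinearMap.ker f)
  rw [h1] at h2
  have hfin : Module.rank ℤ H < Cardinal.aleph0 := Module.rank_lt_aleph0 ℤ H
  have hkfin : Module.rank ℤ (LinearMap.ker f) < Cardinal.aleph0 :=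
    lt_of_le_of_lt ((Submodule.rank_le _).trans (le_refl _)) hfin
  have hker0 : Module.rank ℤ (LinearMap.ker f) = 0 := by
    have ht := Cardinal.toNat_le_toNat h2 hfin
    rw [Cardinal.toNat_add hfin hkfin] at ht
    have : Cardinal.toNat (Module.rank ℤ (LinearMap.ker f)) = 0 := by omega
    rcases Cardinal.toNat_eq_zero.mp this with h | h
    · exact h
    · exact absurd hkfin (not_lt.mpr h)
  have hmem : (⟨x, hx⟩ : H) ∈ LinearMap.ker f := by
    rw [LinearMap.mem_ker]
    apply Subtype.ext
    simpa [hfdef, resMap, LinearMap.restrict_apply] using hφ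
  obtain ⟨a, ha, hax⟩ := rank_eq_zero_iff.mp hker0 ⟨⟨x, hx⟩, hmem⟩
  have hax' : a • x = 0 := by
    have := congrArg (fun y : LinearMap.ker f => ((y : H) : A)) hax
    simpa using this
  exact (smul_eq_zero.mp hax').resolve_left ha

lemma rank_map_eq_of_le [NoZeroSMulDivisors ℤ A] (φ : A →ₗ[ℤ] A)
    {G H : Submodule ℤ A} (hGH : G ≤ H) (hfg : H.FG)
    (hr : Module.rank ℤ (H.map φ) = Module.rank ℤ H) :
    Module.rank ℤ (G.map φ) = Module.rank ℤ G := by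
  have hinj : Function.Injective (resMap φ G) := by
    rw [← LinearMap.ker_eq_bot]
    rw [LinearMap.ker_eq_bot']
    intro y hy0
    have hφy : φ (y : A) = 0 := by
      have := congrArg (fun z => ((z : G.map φ) : A)) hy0
      simpa [resMap, LinearMap.restrict_apply] using this
    exact Subtype.ext (inj_of_rank_map_eq φ H hfg hr (y : A) (hGH y.2) hφy)
  exact ((LinearEquiv.ofBijective (resMap φ G) ⟨hinj, resMap_surj φ G⟩).rank_eq).symm

end AuxLinear

namespace ModData

variable (Λ : ModData)

noncomputable instance : Module.Free ℤ Λ.K :=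
  Module.Free.of_basis (FreeAbelianGroup.basis _)

lemma Lpow_zero (H : AddSubgroup Λ.K) : Λ.Lpow 0 H = H := rfl

lemma Lpow_succ (k : ℕ) (H : AddSubgroup Λ.K) :
    Λ.Lpow (k + 1) H = (Λ.Lpow k H).map Λ.L := by
  unfold Lpow
  exact Function.iterate_succ_apply' _ _ _

lemma lpow_mono {G H : AddSubgroup Λ.K} (h : G ≤ H) (k : ℕ) :
    Λ.Lpow k G ≤ Λ.Lpow k H := by
  induction k with
  | zero => exact h
  | succ k ih => rw [Lpow_succ, Lpow_succ]; exact AddSubgroup.map_mono ih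

lemma rk_eq (H : AddSubgroup Λ.K) :
    Λ.rk H = Module.rank ℤ (AddSubgroup.toIntSubmodule H) := rfl

lemma rk_lpow_succ (k : ℕ) (H : AddSubgroup Λ.K) :
    Λ.rk (Λ.Lpow (k + 1) H)
      = Module.rank ℤ
        ((AddSubgroup.toIntSubmodule (Λ.Lpow k H)).map Λ.L.toIntLinearMap) := by
  rw [rk_eq, Lpow_succ, map_toIntSubmodule]

lemma gen_fg (X : Λ.Mod) : (AddSubgroup.toIntSubmodule (Λ.gen X)).FG := by
  rw [ModData.gen, toIntSubmodule_closure]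
  exact Submodule.fg_span ((X.finite_toSet).image _)

lemma lpow_fg (X : Λ.Mod) (k : ℕ) :
    (AddSubgroup.toIntSubmodule (Λ.Lpow k (Λ.gen X))).FG := by
  induction k with
  | zero => exact Λ.gen_fg X
  | succ k ih =>
    rw [Lpow_succ, map_toIntSubmodule]
    exact Submodule.FG.map _ ih

lemma rk_lpow_lt_aleph0 (X : Λ.Mod) (k : ℕ) :
    Λ.rk (Λ.Lpow k (Λ.gen X)) < Cardinal.aleph0 := by
  haveI : Module.Finite ℤ (AddSubgroup.toIntSubmodule (Λ.Lpow k (Λ.gen X))) :=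
    Module.Finite.iff_fg.mpr (Λ.lpow_fg X k)
  exact Module.rank_lt_aleph0 ℤ _

lemma rk_lpow_antitone (X : Λ.Mod) (k : ℕ) :
    Λ.rk (Λ.Lpow (k + 1) (Λ.gen X)) ≤ Λ.rk (Λ.Lpow k (Λ.gen X)) := by
  rw [rk_lpow_succ, rk_eq]
  exact myRankMapLe _ _

/-- the set of stabilization points of the rank sequence is nonempty -/
lemma stab_nonempty (X : Λ.Mod) :
    {n : ℕ | ∀ k, n ≤ k →
      Λ.rk (Λ.Lpow k (Λ.gen X)) = Λ.rk (Λ.Lpow (k + 1) (Λ.gen X))}.Nonempty := by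
  set r : ℕ → ℕ := fun k => (Λ.rk (Λ.Lpow k (Λ.gen X))).toNat with hr
  have hanti : ∀ k, r (k + 1) ≤ r k := fun k =>
    Cardinal.toNat_le_toNat (Λ.rk_lpow_antitone X k) (Λ.rk_lpow_lt_aleph0 X k)
  have hmono : Antitone r := antitone_nat_of_succ_le hanti
  obtain ⟨k₀, hk₀⟩ : ∃ k₀, r k₀ = sInf (Set.range r) :=
    Nat.sInf_mem (Set.range_nonempty r)
  refine ⟨k₀, fun k hk => ?_⟩
  have h1 : r k = r k₀ := le_antisymm (hmono hk) (hk₀ ▸ Nat.sInf_le ⟨k, rfl⟩)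
  have h2 : r (k + 1) = r k₀ :=
    le_antisymm (hmono (le_trans hk (Nat.le_succ k))) (hk₀ ▸ Nat.sInf_le ⟨k + 1, rfl⟩)
  by_contra hne
  have hlt : Λ.rk (Λ.Lpow (k + 1) (Λ.gen X)) < Λ.rk (Λ.Lpow k (Λ.gen X)) :=
    lt_of_le_of_ne (Λ.rk_lpow_antitone X k) (Ne.symm hne)
  have h3 := Cardinal.toNat_lt_toNat hlt (Λ.rk_lpow_lt_aleph0 X k)
  rw [show Cardinal.toNat (Λ.rk (Λ.Lpow (k + 1) (Λ.gen X))) = r (k + 1) from rfl,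
    show Cardinal.toNat (Λ.rk (Λ.Lpow k (Λ.gen X))) = r k from rfl] at h3
  omega

lemma phi_mono {X Y : Λ.Mod} (hXY : Λ.gen X ≤ Λ.gen Y) : Λ.Phi X ≤ Λ.Phi Y := by
  apply Nat.sInf_le
  intro k hk
  have hY : ∀ j, Λ.Phi Y ≤ j →
      Λ.rk (Λ.Lpow j (Λ.gen Y)) = Λ.rk (Λ.Lpow (j + 1) (Λ.gen Y)) :=
    Nat.sInf_mem (Λ.stab_nonempty Y)
  have hYk := hY k hk
  rw [rk_lpow_succ, rk_eq] at hYk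
  have hle : (AddSubgroup.toIntSubmodule (Λ.Lpow k (Λ.gen X)))
      ≤ (AddSubgroup.toIntSubmodule (Λ.Lpow k (Λ.gen Y))) :=
    fun x hx => Λ.lpow_mono hXY k hx
  haveI : IsAddTorsionFree Λ.K := Module.isTorsionFree_int_iff_isAddTorsionFree.mp inferInstance
  have := rank_map_eq_of_le Λ.L.toIntLinearMap hle (Λ.lpow_fg Y k) hYk.symm
  rw [rk_lpow_succ, rk_eq]
  exact this.symm

lemma Ω_add (X Y : Λ.Mod) : Λ.Ω (X + Y) = Λ.Ω X + Λ.Ω Y :=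
  Multiset.add_bind _ _ _

lemma Ωpow_add (k : ℕ) (X Y : Λ.Mod) :
    Λ.Ω^[k] (X + Y) = Λ.Ω^[k] X + Λ.Ω^[k] Y := by
  induction k generalizing X Y with
  | zero => rfl
  | succ k ih =>
    rw [Function.iterate_succ_apply, Function.iterate_succ_apply,
      Function.iterate_succ_apply, Ω_add, ih]

lemma Ωpow_mono (k : ℕ) {X Y : Λ.Mod} (h : X ≤ Y) : Λ.Ω^[k] X ≤ Λ.Ω^[k] Y := by
  obtain ⟨Z, rfl⟩ := Multiset.le_iff_exists_add.mp h
  rw [Ωpow_add]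
  exact le_add_right (le_refl _)

lemma pd_zero_le : Λ.pd 0 ≤ 0 := by
  apply sInf_le
  exact ⟨0, fun i hi => absurd hi (Multiset.notMem_zero i), rfl⟩

end ModData

lemma enat_le_sub {a m : ℕ} {b : ℕ∞} (h : (a : ℕ∞) + b ≤ (m : ℕ∞)) :
    b ≤ (m : ℕ∞) - (a : ℕ∞) := by
  have hb : b ≠ ⊤ := by
    intro hbt
    rw [hbt, add_top] at h
    exact absurd (le_antisymm h le_top).symm (by simp)
  lift b to ℕ using hb with b'
  rw [← Nat.cast_add, Nat.cast_le] at h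
  have : ((m - a : ℕ) : ℕ∞) = (m : ℕ∞) - (a : ℕ∞) := by
    simp [ENat.coe_sub]
  rw [← this]
  exact_mod_cast Nat.le_sub_of_add_le (by omega)

/-- if `C` is closed under direct sums, `Φ-dim C = n < ∞` and
`Ψ-dim C = m < ∞`, then `fin.dim (add Ω^n C) ≤ m - n < ∞`. -/
theorem findim_syzygies_le_of_PsiDim_finite (Λ : ModData) (C : Set Λ.Mod)
    (hC : ∀ X ∈ C, ∀ Y ∈ C, X + Y ∈ C)
    (n : ℕ) (hn : Λ.PhiDim C = (n : ℕ∞))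
    (m : ℕ) (hm : Λ.PsiDim C = (m : ℕ∞)) :
    Λ.findim (Λ.addCl (Λ.Ω^[n] '' C)) ≤ (m : ℕ∞) - n := by
  unfold ModData.findim
  apply sSup_le
  rintro e ⟨X, ⟨⟨Y, hYmem, hXY⟩, hpd⟩, rfl⟩
  have hYchar : Y = 0 ∨ ∃ Z ∈ C, Y = Λ.Ω^[n] Z := by
    refine AddSubmonoid.closure_induction
      (motive := fun y _ => y = 0 ∨ ∃ Z ∈ C, y = Λ.Ω^[n] Z) ?_ ?_ ?_ hYmem
    · rintro y ⟨Z, hZ, rfl⟩; exact Or.inr ⟨Z, hZ, rfl⟩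
    · exact Or.inl rfl
    · rintro y z _ _ (rfl | ⟨Z, hZ, rfl⟩) (rfl | ⟨W, hW, rfl⟩)
      · exact Or.inl (by simp)
      · exact Or.inr ⟨W, hW, by simp⟩
      · exact Or.inr ⟨Z, hZ, by simp⟩
      · exact Or.inr ⟨Z + W, hC _ hZ _ hW, (Λ.Ωpow_add n Z W).symm⟩
  rcases hYchar with rfl | ⟨Z, hZ, rfl⟩
  · have hX0 : X = 0 := Multiset.le_zero.mp hXY
    rw [hX0]
    exact (Λ.pd_zero_le).trans (zero_le ..)
  · -- the main case
    have hPhiDim : Λ.PhiDim C = ⨆ X ∈ C, ((Λ.Phi X : ℕ∞)) := rfl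
    have hle : ∀ W ∈ C, Λ.Phi W ≤ n := by
      intro W hW
      have h1 : ((Λ.Phi W : ℕ∞)) ≤ Λ.PhiDim C := by
        rw [hPhiDim]
        exact le_iSup₂ (f := fun X _ => ((Λ.Phi X : ℕ∞))) W hW
      rw [hn] at h1
      exact_mod_cast h1
    obtain ⟨Zs, hZs, hZsn⟩ : ∃ W ∈ C, Λ.Phi W = n := by
      by_contra hcon
      push_neg at hcon
      rcases Nat.eq_zero_or_pos n with rfl | hpos
      · exact hcon Z hZ (Nat.le_zero.mp (hle Z hZ))
      · have h2 : Λ.PhiDim C ≤ ((n - 1 : ℕ) : ℕ∞) := by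
          rw [hPhiDim]
          apply iSup₂_le
          intro W hW
          have h3 : Λ.Phi W < n := lt_of_le_of_ne (hle W hW) (hcon W hW)
          exact_mod_cast Nat.le_sub_one_of_lt h3
        rw [hn] at h2
        have h4 : n ≤ n - 1 := by exact_mod_cast h2
        omega
    set Zt := Z + Zs with hZt
    have hZtC : Zt ∈ C := hC Z hZ Zs hZs
    have hgen1 : Λ.gen Zs ≤ Λ.gen Zt :=
      AddSubgroup.closure_mono (Set.image_mono fun i hi =>
        Multiset.mem_add.mpr (Or.inr hi))
    have hPhiZt : Λ.Phi Zt = n :=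
      le_antisymm (hle Zt hZtC) (hZsn ▸ Λ.phi_mono hgen1)
    have hPsi : Λ.Psi Zt ≤ (m : ℕ∞) := by
      have h1 : Λ.Psi Zt ≤ Λ.PsiDim C := by
        have hPsiDim : Λ.PsiDim C = ⨆ X ∈ C, Λ.Psi X := rfl
        rw [hPsiDim]
        exact le_iSup₂ (f := fun X _ => Λ.Psi X) Zt hZtC
      rwa [hm] at h1
    have hPsiEq : Λ.Psi Zt
        = (Λ.Phi Zt : ℕ∞) + Λ.findim (Λ.addCl {Λ.Ω^[Λ.Phi Zt] Zt}) := rfl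
    rw [hPsiEq, hPhiZt] at hPsi
    have hXmem : X ∈ Λ.addCl {Λ.Ω^[n] Zt} := by
      refine ⟨Λ.Ω^[n] Zt, AddSubmonoid.subset_closure rfl, ?_⟩
      calc X ≤ Λ.Ω^[n] Z := hXY
        _ ≤ Λ.Ω^[n] Zt := Λ.Ωpow_mono n (le_add_right (le_refl Z))
    have hpdle : Λ.pd X ≤ Λ.findim (Λ.addCl {Λ.Ω^[n] Zt}) :=
      le_sSup ⟨X, ⟨hXmem, hpd⟩, rfl⟩
    exact hpdle.trans (enat_le_sub hPsi)
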